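/- Let m ≥ 1 and j ∈ {1, 2, 3, 4}. There is a constant C_j ≥ 0, independent of t, such that for all t ≥ 0, all unit vectors V₁, …, V_j ∈ ℍ^m, and all (X,Z) ∈ ℍ^m × Im(ℍ): |(E_{V₁} E_{V₂} ⋯ E_{V_j} B_t)(X,Z)| ≤ C_j · B_t(X,Z)^{1 − j/4}, where B_t(X,Z) = (e^{−2t} + ‖X‖²/4)² + |Z|². Explicitly: |E_V B_t| ≤ C₁ B_t^{3/4}, |E_{V₁}E_{V₂} B_t| ≤ C₂ B_t^{1/2}, |E_{V₁}E_{V₂}E_{V₃} B_t| ≤ C₃ B_t^{1/4}, and |E_{V₁}E_{V₂}E_{V₃}E_{V₄} B_t| ≤ C₄. -/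

import Mathlib

open Quaternion

noncomputable section

open scoped RealInnerProductSpace

instance : StarModule ℝ ℍ := ⟨fun r a => by simp [Quaternion.star_smul]⟩

/-- The imaginary part `Im(q) = (q - q*)/2` of a quaternion. -/
def qIm (q : Quaternion ℝ) : Quaternion ℝ := (q - star q) / 2

/-- The left-invariant vector field `E_V` of the 2-step nilpotent group
`N̄ = ℍ^m × Im(ℍ)`, acting on (`F`-valued) functions on `ℍ^m × ℍ` by
`(E_V f)(X,Z) = Df(X,Z)[(V, Im(X*V)/2)]` (Fréchet derivative). -/
def EV {F : Type*} [NormedAddCommGroup F] [NormedSpace ℝ F] (m : ℕ)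
    (V : Fin m → Quaternion ℝ)
    (f : (Fin m → Quaternion ℝ) × Quaternion ℝ → F) :
    (Fin m → Quaternion ℝ) × Quaternion ℝ → F :=
  fun p => fderiv ℝ f p (V, qIm (∑ j, star (p.1 j) * V j) / 2)

/-- Iterated left-invariant derivative `E_{V₁} E_{V₂} ⋯ E_{V_j} f`. -/
def EIter {F : Type*} [NormedAddCommGroup F] [NormedSpace ℝ F] (m : ℕ) :
    List (Fin m → Quaternion ℝ) →
      ((Fin m → Quaternion ℝ) × Quaternion ℝ → F) →
      ((Fin m → Quaternion ℝ) × Quaternion ℝ → F)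
  | [], f => f
  | V :: Vs, f => EV m V (EIter m Vs f)

/-- `B_t(X,Z) = (e^{-2t} + ‖X‖²/4)² + |Z|²` as a function on `ℍ^m × ℍ`,
where `‖X‖² = ∑ⱼ |Xⱼ|²`. -/
def BtF (m : ℕ) (t : ℝ) : (Fin m → Quaternion ℝ) × Quaternion ℝ → ℝ :=
  fun p => (Real.exp (-2 * t) + (∑ j, Quaternion.normSq (p.1 j)) / 4) ^ 2
    + Quaternion.normSq p.2

variable {m : ℕ}

def qS (m : ℕ) (X V : Fin m → ℍ) : ℍ := ∑ j, star (X j) * V j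

def qW (m : ℕ) (X V : Fin m → ℍ) : ℍ := (4⁻¹ : ℝ) • (qS m X V - star (qS m X V))

def qR (m : ℕ) (X V : Fin m → ℍ) : ℝ := ∑ j, ⟪X j, V j⟫

lemma qdiv2 (q : ℍ) : q / 2 = (2⁻¹ : ℝ) • q := by
  rw [div_eq_mul_inv, show ((2:ℍ))⁻¹ = (((2:ℝ)⁻¹ : ℝ):ℍ) from by
    rw [coe_inv]; exact congrArg Inv.inv (by exact_mod_cast rfl), mul_coe_eq_smul]

lemma qIm_div_two (q : ℍ) : qIm q / 2 = (4⁻¹ : ℝ) • (q - star q) := by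
  rw [qIm, qdiv2, qdiv2, smul_smul]; norm_num

lemma EV_apply {F : Type*} [NormedAddCommGroup F] [NormedSpace ℝ F]
    (V : Fin m → ℍ) (f : (Fin m → ℍ) × ℍ → F) (p : (Fin m → ℍ) × ℍ)
    {L : ((Fin m → ℍ) × ℍ) →L[ℝ] F} (h : HasFDerivAt f L p) :
    EV m V f p = L (V, qW m p.1 V) := by
  rw [EV, h.fderiv, qIm_div_two]; rfl

/-! ### The explicit derivative formulas -/

def g1 (m : ℕ) (a : ℝ) (V2 : Fin m → ℍ) : (Fin m → ℍ) × ℍ → ℝ := fun p =>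
  (a + qR m p.1 p.1 / 4) * qR m p.1 V2 + 2 * ⟪p.2, qW m p.1 V2⟫

def g2 (m : ℕ) (a : ℝ) (V1 V2 : Fin m → ℍ) : (Fin m → ℍ) × ℍ → ℝ := fun p =>
  qR m p.1 V1 * qR m p.1 V2 / 2 + (a + qR m p.1 p.1 / 4) * qR m V1 V2
    + 2 * ⟪qW m p.1 V1, qW m p.1 V2⟫ + 2 * ⟪p.2, qW m V1 V2⟫

def g3 (m : ℕ) (V0 V1 V2 : Fin m → ℍ) : (Fin m → ℍ) × ℍ → ℝ := fun p =>
  qR m V0 V1 * qR m p.1 V2 / 2 + qR m p.1 V1 * qR m V0 V2 / 2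
    + qR m p.1 V0 * qR m V1 V2 / 2 + 2 * ⟪qW m V0 V1, qW m p.1 V2⟫
    + 2 * ⟪qW m p.1 V1, qW m V0 V2⟫ + 2 * ⟪qW m p.1 V0, qW m V1 V2⟫

def g4 (m : ℕ) (U V0 V1 V2 : Fin m → ℍ) : ℝ :=
  qR m V0 V1 * qR m U V2 / 2 + qR m U V1 * qR m V0 V2 / 2
    + qR m U V0 * qR m V1 V2 / 2 + 2 * ⟪qW m V0 V1, qW m U V2⟫
    + 2 * ⟪qW m U V1, qW m V0 V2⟫ + 2 * ⟪qW m U V0, qW m V1 V2⟫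

section deriv
variable (p : (Fin m → ℍ) × ℍ)

lemma hp1 (j : Fin m) : HasFDerivAt (fun p : (Fin m → ℍ) × ℍ => p.1 j)
    ((ContinuousLinearMap.proj j).comp (ContinuousLinearMap.fst ℝ (Fin m → ℍ) ℍ)) p :=
  ((ContinuousLinearMap.proj j).comp (ContinuousLinearMap.fst ℝ (Fin m → ℍ) ℍ)).hasFDerivAt

lemma hp2 : HasFDerivAt (fun p : (Fin m → ℍ) × ℍ => p.2)
    (ContinuousLinearMap.snd ℝ (Fin m → ℍ) ℍ) p :=
  (ContinuousLinearMap.snd ℝ (Fin m → ℍ) ℍ).hasFDerivAt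

lemma level1 (t : ℝ) (V2 : Fin m → ℍ) :
    EV m V2 (BtF m t) = g1 m (Real.exp (-2*t)) V2 := by
  funext p
  have hB : BtF m t = fun p : (Fin m → ℍ) × ℍ =>
      (Real.exp (-2*t) + 4⁻¹ * ∑ j, ⟪p.1 j, p.1 j⟫) *
        (Real.exp (-2*t) + 4⁻¹ * ∑ j, ⟪p.1 j, p.1 j⟫) + ⟪p.2, p.2⟫ := by
    funext p; simp [BtF, Quaternion.inner_self, Quaternion.normSq_eq_norm_mul_self, sq]; ring
  rw [hB]
  have hsum : HasFDerivAt (fun p : (Fin m → ℍ) × ℍ => ∑ j, ⟪p.1 j, p.1 j⟫) _ p :=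
    HasFDerivAt.fun_sum (fun j _ => (hp1 p j).inner ℝ (hp1 p j))
  have hu := (hsum.const_mul (4⁻¹:ℝ)).const_add (Real.exp (-2*t))
  have h := (hu.mul hu).add ((hp2 p).inner ℝ (hp2 p))
  refine (EV_apply _ _ _ h).trans ?_
  simp only [g1, fderivInnerCLM_apply, qR, ContinuousLinearMap.add_apply,
    ContinuousLinearMap.comp_apply, ContinuousLinearMap.prod_apply,
    ContinuousLinearMap.smul_apply, ContinuousLinearMap.coe_fst',
    ContinuousLinearMap.coe_snd', ContinuousLinearMap.proj_apply,
    ContinuousLinearMap.coe_sum', Finset.sum_apply, smul_eq_mul, Finset.mul_sum]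
  have hc : ∀ x, ⟪V2 x, p.1 x⟫ = ⟪p.1 x, V2 x⟫ := fun x => real_inner_comm _ _
  have hc2 : ⟪qW m p.1 V2, p.2⟫ = ⟪p.2, qW m p.1 V2⟫ := real_inner_comm _ _
  simp only [hc, hc2, ← two_mul, ← Finset.mul_sum, Finset.sum_add_distrib]
  ring

lemma level2 (a : ℝ) (V1 V2 : Fin m → ℍ) :
    EV m V1 (g1 m a V2) = g2 m a V1 V2 := by
  funext p
  have hg : g1 m a V2 = fun p : (Fin m → ℍ) × ℍ =>
      (a + 4⁻¹ * ∑ j, ⟪p.1 j, p.1 j⟫) * (∑ j, ⟪p.1 j, V2 j⟫)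
      + 2 * ⟪p.2, (4⁻¹:ℝ) • ((∑ j, star (p.1 j) * V2 j)
          - star (∑ j, star (p.1 j) * V2 j))⟫ := by
    funext p; simp only [g1, qR, qW, qS]; ring
  rw [hg]
  have hsum : HasFDerivAt (fun p : (Fin m → ℍ) × ℍ => ∑ j, ⟪p.1 j, p.1 j⟫) _ p :=
    HasFDerivAt.fun_sum (fun j _ => (hp1 p j).inner ℝ (hp1 p j))
  have hu := (hsum.const_mul (4⁻¹:ℝ)).const_add a
  have hR2 : HasFDerivAt (fun p : (Fin m → ℍ) × ℍ => ∑ j, ⟪p.1 j, V2 j⟫) _ p :=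
    HasFDerivAt.fun_sum (fun j _ => (hp1 p j).inner ℝ (hasFDerivAt_const (V2 j) p))
  have hS2 : HasFDerivAt (fun p : (Fin m → ℍ) × ℍ => ∑ j, star (p.1 j) * V2 j) _ p :=
    HasFDerivAt.fun_sum (fun j _ => ((hp1 p j).star).mul_const' (V2 j))
  have hW2 := (hS2.sub hS2.star).const_smul (4⁻¹:ℝ)
  have h := (hu.mul hR2).add (((hp2 p).inner ℝ hW2).const_mul 2)
  refine (EV_apply _ _ _ h).trans ?_
  simp only [g2, fderivInnerCLM_apply, qR, qW, qS, ContinuousLinearMap.add_apply,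
    ContinuousLinearMap.comp_apply, ContinuousLinearMap.prod_apply,
    ContinuousLinearMap.smul_apply, ContinuousLinearMap.coe_fst',
    ContinuousLinearMap.coe_snd', ContinuousLinearMap.proj_apply,
    ContinuousLinearMap.coe_sum', Finset.sum_apply, smul_eq_mul, Finset.mul_sum,
    ContinuousLinearMap.sub_apply, ContinuousLinearMap.smulRight_apply,
    starL'_apply, ContinuousLinearMap.coe_coe, ContinuousLinearEquiv.coe_coe,
    ContinuousLinearMap.zero_apply, inner_zero_right, Pi.smul_apply, Pi.sub_apply, op_smul_eq_mul]
  have hc : ∀ x, ⟪V1 x, p.1 x⟫ = ⟪p.1 x, V1 x⟫ := fun x => real_inner_comm _ _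
  simp only [hc, ← two_mul, ← Finset.mul_sum]
  ring

end deriv

lemma level3 (a : ℝ) (V0 V1 V2 : Fin m → ℍ) :
    EV m V0 (g2 m a V1 V2) = g3 m V0 V1 V2 := by
  funext p
  have hg : g2 m a V1 V2 = fun p : (Fin m → ℍ) × ℍ =>
      2⁻¹ * ((∑ j, ⟪p.1 j, V1 j⟫) * (∑ j, ⟪p.1 j, V2 j⟫))
      + (a + 4⁻¹ * ∑ j, ⟪p.1 j, p.1 j⟫) * qR m V1 V2
      + 2 * ⟪(4⁻¹:ℝ) • ((∑ j, star (p.1 j) * V1 j) - star (∑ j, star (p.1 j) * V1 j)),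
             (4⁻¹:ℝ) • ((∑ j, star (p.1 j) * V2 j) - star (∑ j, star (p.1 j) * V2 j))⟫
      + 2 * ⟪p.2, qW m V1 V2⟫ := by
    funext p; simp only [g2, qR, qW, qS]; ring
  rw [hg]
  have hsum : HasFDerivAt (fun p : (Fin m → ℍ) × ℍ => ∑ j, ⟪p.1 j, p.1 j⟫) _ p :=
    HasFDerivAt.fun_sum (fun j _ => (hp1 p j).inner ℝ (hp1 p j))
  have hu := (hsum.const_mul (4⁻¹:ℝ)).const_add a
  have hR1 : HasFDerivAt (fun p : (Fin m → ℍ) × ℍ => ∑ j, ⟪p.1 j, V1 j⟫) _ p :=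
    HasFDerivAt.fun_sum (fun j _ => (hp1 p j).inner ℝ (hasFDerivAt_const (V1 j) p))
  have hR2 : HasFDerivAt (fun p : (Fin m → ℍ) × ℍ => ∑ j, ⟪p.1 j, V2 j⟫) _ p :=
    HasFDerivAt.fun_sum (fun j _ => (hp1 p j).inner ℝ (hasFDerivAt_const (V2 j) p))
  have hS1 : HasFDerivAt (fun p : (Fin m → ℍ) × ℍ => ∑ j, star (p.1 j) * V1 j) _ p :=
    HasFDerivAt.fun_sum (fun j _ => ((hp1 p j).star).mul_const' (V1 j))
  have hS2 : HasFDerivAt (fun p : (Fin m → ℍ) × ℍ => ∑ j, star (p.1 j) * V2 j) _ p :=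
    HasFDerivAt.fun_sum (fun j _ => ((hp1 p j).star).mul_const' (V2 j))
  have hW1 := (hS1.sub hS1.star).const_smul (4⁻¹:ℝ)
  have hW2 := (hS2.sub hS2.star).const_smul (4⁻¹:ℝ)
  have h := ((((hR1.mul hR2).const_mul (2⁻¹:ℝ)).add
      (hu.mul_const (qR m V1 V2))).add ((hW1.inner ℝ hW2).const_mul 2)).add
    (((hp2 p).inner ℝ (hasFDerivAt_const (qW m V1 V2) p)).const_mul 2)
  refine (EV_apply _ _ _ h).trans ?_
  simp only [g3, fderivInnerCLM_apply, qR, qW, qS, ContinuousLinearMap.add_apply,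
    ContinuousLinearMap.comp_apply, ContinuousLinearMap.prod_apply,
    ContinuousLinearMap.smul_apply, ContinuousLinearMap.coe_fst',
    ContinuousLinearMap.coe_snd', ContinuousLinearMap.proj_apply,
    ContinuousLinearMap.coe_sum', Finset.sum_apply, smul_eq_mul, Finset.mul_sum,
    ContinuousLinearMap.sub_apply, ContinuousLinearMap.smulRight_apply,
    starL'_apply, ContinuousLinearMap.coe_coe, ContinuousLinearEquiv.coe_coe,
    ContinuousLinearMap.zero_apply, inner_zero_right, inner_zero_left, Pi.smul_apply, Pi.sub_apply,
    op_smul_eq_mul]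
  have hc0 : ∀ x, ⟪V0 x, p.1 x⟫ = ⟪p.1 x, V0 x⟫ := fun x => real_inner_comm _ _
  have hc1 : ∀ x, ⟪V1 x, p.1 x⟫ = ⟪p.1 x, V1 x⟫ := fun x => real_inner_comm _ _
  have hcW : ⟪(4⁻¹:ℝ) • ((∑ j, star (p.1 j) * V1 j) - star (∑ j, star (p.1 j) * V1 j)),
      (4⁻¹:ℝ) • ((∑ j, star (V0 j) * V2 j) - star (∑ j, star (V0 j) * V2 j))⟫
      = ⟪(4⁻¹:ℝ) • ((∑ j, star (V0 j) * V2 j) - star (∑ j, star (V0 j) * V2 j)),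
        (4⁻¹:ℝ) • ((∑ j, star (p.1 j) * V1 j) - star (∑ j, star (p.1 j) * V1 j))⟫ :=
    real_inner_comm _ _
  simp only [hc0, hc1, hcW, zero_add, ← two_mul, ← Finset.mul_sum]
  ring

lemma level4 (V0 V1 V2 U : Fin m → ℍ) :
    EV m U (g3 m V0 V1 V2) = fun _ => g4 m U V0 V1 V2 := by
  funext p
  have hg : g3 m V0 V1 V2 = fun p : (Fin m → ℍ) × ℍ =>
      2⁻¹ * (qR m V0 V1 * ∑ j, ⟪p.1 j, V2 j⟫)
      + 2⁻¹ * ((∑ j, ⟪p.1 j, V1 j⟫) * qR m V0 V2)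
      + 2⁻¹ * ((∑ j, ⟪p.1 j, V0 j⟫) * qR m V1 V2)
      + 2 * ⟪qW m V0 V1,
          (4⁻¹:ℝ) • ((∑ j, star (p.1 j) * V2 j) - star (∑ j, star (p.1 j) * V2 j))⟫
      + 2 * ⟪(4⁻¹:ℝ) • ((∑ j, star (p.1 j) * V1 j) - star (∑ j, star (p.1 j) * V1 j)),
          qW m V0 V2⟫
      + 2 * ⟪(4⁻¹:ℝ) • ((∑ j, star (p.1 j) * V0 j) - star (∑ j, star (p.1 j) * V0 j)),
          qW m V1 V2⟫ := by
    funext p; simp only [g3, qR, qW, qS]; ring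
  rw [hg]
  have hR0 : HasFDerivAt (fun p : (Fin m → ℍ) × ℍ => ∑ j, ⟪p.1 j, V0 j⟫) _ p :=
    HasFDerivAt.fun_sum (fun j _ => (hp1 p j).inner ℝ (hasFDerivAt_const (V0 j) p))
  have hR1 : HasFDerivAt (fun p : (Fin m → ℍ) × ℍ => ∑ j, ⟪p.1 j, V1 j⟫) _ p :=
    HasFDerivAt.fun_sum (fun j _ => (hp1 p j).inner ℝ (hasFDerivAt_const (V1 j) p))
  have hR2 : HasFDerivAt (fun p : (Fin m → ℍ) × ℍ => ∑ j, ⟪p.1 j, V2 j⟫) _ p :=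
    HasFDerivAt.fun_sum (fun j _ => (hp1 p j).inner ℝ (hasFDerivAt_const (V2 j) p))
  have hS0 : HasFDerivAt (fun p : (Fin m → ℍ) × ℍ => ∑ j, star (p.1 j) * V0 j) _ p :=
    HasFDerivAt.fun_sum (fun j _ => ((hp1 p j).star).mul_const' (V0 j))
  have hS1 : HasFDerivAt (fun p : (Fin m → ℍ) × ℍ => ∑ j, star (p.1 j) * V1 j) _ p :=
    HasFDerivAt.fun_sum (fun j _ => ((hp1 p j).star).mul_const' (V1 j))
  have hS2 : HasFDerivAt (fun p : (Fin m → ℍ) × ℍ => ∑ j, star (p.1 j) * V2 j) _ p :=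
    HasFDerivAt.fun_sum (fun j _ => ((hp1 p j).star).mul_const' (V2 j))
  have hW0 := (hS0.sub hS0.star).const_smul (4⁻¹:ℝ)
  have hW1 := (hS1.sub hS1.star).const_smul (4⁻¹:ℝ)
  have hW2 := (hS2.sub hS2.star).const_smul (4⁻¹:ℝ)
  have h := (((((hR2.const_mul (qR m V0 V1)).const_mul (2⁻¹:ℝ)).add
      ((hR1.mul_const (qR m V0 V2)).const_mul (2⁻¹:ℝ))).add
      ((hR0.mul_const (qR m V1 V2)).const_mul (2⁻¹:ℝ))).add
      (((hasFDerivAt_const (qW m V0 V1) p).inner ℝ hW2).const_mul 2)).add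
      (((hW1.inner ℝ (hasFDerivAt_const (qW m V0 V2) p)).const_mul 2)) |>.add
      (((hW0.inner ℝ (hasFDerivAt_const (qW m V1 V2) p)).const_mul 2))
  refine (EV_apply _ _ _ h).trans ?_
  simp only [g4, fderivInnerCLM_apply, qR, qW, qS, ContinuousLinearMap.add_apply,
    ContinuousLinearMap.comp_apply, ContinuousLinearMap.prod_apply,
    ContinuousLinearMap.smul_apply, ContinuousLinearMap.coe_fst',
    ContinuousLinearMap.coe_snd', ContinuousLinearMap.proj_apply,
    ContinuousLinearMap.coe_sum', Finset.sum_apply, smul_eq_mul, Finset.mul_sum,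
    ContinuousLinearMap.sub_apply, ContinuousLinearMap.smulRight_apply,
    starL'_apply, ContinuousLinearMap.coe_coe, ContinuousLinearEquiv.coe_coe,
    ContinuousLinearMap.zero_apply, inner_zero_right, inner_zero_left, Pi.smul_apply, Pi.sub_apply,
    op_smul_eq_mul]
  have hc0 : ∀ x, ⟪U x, V0 x⟫ = ⟪V0 x, U x⟫ := fun x => real_inner_comm _ _
  have hc1 : ∀ x, ⟪U x, V1 x⟫ = ⟪V1 x, U x⟫ := fun x => real_inner_comm _ _
  have hcW1 : ⟪(4⁻¹:ℝ) • ((∑ j, star (U j) * V1 j) - star (∑ j, star (U j) * V1 j)),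
      qW m V0 V2⟫ = ⟪qW m V0 V2,
      (4⁻¹:ℝ) • ((∑ j, star (U j) * V1 j) - star (∑ j, star (U j) * V1 j))⟫ :=
    real_inner_comm _ _
  have hcW0 : ⟪(4⁻¹:ℝ) • ((∑ j, star (U j) * V0 j) - star (∑ j, star (U j) * V0 j)),
      qW m V1 V2⟫ = ⟪qW m V1 V2,
      (4⁻¹:ℝ) • ((∑ j, star (U j) * V0 j) - star (∑ j, star (U j) * V0 j))⟫ :=
    real_inner_comm _ _
  simp only [hc0, hc1, hcW0, hcW1, zero_add, ← two_mul, ← Finset.mul_sum]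
  ring

/-! ### Norm bounds -/

lemma qR_self_nonneg (X : Fin m → ℍ) : 0 ≤ qR m X X :=
  Finset.sum_nonneg fun j _ => real_inner_self_nonneg

lemma sumCS (X V : Fin m → ℍ) :
    ∑ j, ‖X j‖ * ‖V j‖ ≤ Real.sqrt (qR m X X) * Real.sqrt (qR m V V) := by
  have h := Finset.sum_mul_sq_le_sq_mul_sq Finset.univ (fun j => ‖X j‖) (fun j => ‖V j‖)
  have h0 : (0:ℝ) ≤ ∑ j, ‖X j‖ * ‖V j‖ :=
    Finset.sum_nonneg fun j _ => mul_nonneg (norm_nonneg _) (norm_nonneg _)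
  have hx : qR m X X = ∑ j, ‖X j‖^2 := by simp [qR, real_inner_self_eq_norm_sq]
  have hv : qR m V V = ∑ j, ‖V j‖^2 := by simp [qR, real_inner_self_eq_norm_sq]
  calc ∑ j, ‖X j‖ * ‖V j‖ = Real.sqrt ((∑ j, ‖X j‖ * ‖V j‖)^2) := (Real.sqrt_sq h0).symm
    _ ≤ Real.sqrt ((∑ j, ‖X j‖^2) * ∑ j, ‖V j‖^2) := Real.sqrt_le_sqrt h
    _ = Real.sqrt (qR m X X) * Real.sqrt (qR m V V) := by
        rw [hx, hv, Real.sqrt_mul (Finset.sum_nonneg fun j _ => sq_nonneg _)]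

lemma qR_abs_le (X V : Fin m → ℍ) :
    |qR m X V| ≤ Real.sqrt (qR m X X) * Real.sqrt (qR m V V) := by
  refine le_trans ?_ (sumCS X V)
  refine (Finset.abs_sum_le_sum_abs _ _).trans (Finset.sum_le_sum fun j _ => ?_)
  exact abs_real_inner_le_norm _ _

lemma qW_norm_le (X V : Fin m → ℍ) :
    ‖qW m X V‖ ≤ Real.sqrt (qR m X X) * Real.sqrt (qR m V V) / 2 := by
  have hS : ‖qS m X V‖ ≤ Real.sqrt (qR m X X) * Real.sqrt (qR m V V) := by
    refine le_trans (norm_sum_le _ _) (le_trans (le_of_eq ?_) (sumCS X V))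
    simp [norm_mul, norm_star]
  have : ‖qW m X V‖ ≤ 4⁻¹ * (‖qS m X V‖ + ‖qS m X V‖) := by
    rw [qW, norm_smul]
    simp only [norm_inv, Real.norm_ofNat]
    gcongr
    exact (norm_sub_le _ _).trans (by rw [norm_star])
  linarith

lemma qR_self_eq (X : Fin m → ℍ) : qR m X X = ∑ k, Quaternion.normSq (X k) := by
  simp [qR, Quaternion.inner_self, Quaternion.normSq_eq_norm_mul_self, sq]

lemma BtF_val (t : ℝ) (X : Fin m → ℍ) (Z : ℍ) :
    BtF m t (X, Z) = (Real.exp (-2*t) + qR m X X/4)^2 + ‖Z‖^2 := by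
  simp [BtF, qR_self_eq, Quaternion.normSq_eq_norm_mul_self, sq]

lemma abs_add4 (a b c d : ℝ) : |a+b+c+d| ≤ |a|+|b|+|c|+|d| := by
  calc |a+b+c+d| ≤ |a+b+c| + |d| := abs_add_le _ _
  _ ≤ (|a+b| + |c|) + |d| := add_le_add_left (abs_add_le _ _) _
  _ ≤ ((|a| + |b|) + |c|) + |d| := by
      exact add_le_add_left (add_le_add_left (abs_add_le _ _) _) _

lemma abs_add6 (a b c d e f : ℝ) : |a+b+c+d+e+f| ≤ |a|+|b|+|c|+|d|+|e|+|f| := by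
  calc |a+b+c+d+e+f| ≤ |a+b+c+d| + |e| + |f| := by
        refine (abs_add_le _ _).trans (add_le_add_left ((abs_add_le _ _).trans ?_) _)
        exact add_le_add_left le_rfl _
  _ ≤ _ := by
      have := abs_add4 a b c d
      linarith

lemma keyfacts (a q z : ℝ) (ha : 0 < a) (hq : 0 ≤ q) (hz : 0 ≤ z) :
    0 < (a + q/4)^2 + z^2 ∧
    a + q/4 ≤ ((a + q/4)^2 + z^2) ^ (1/2:ℝ) ∧
    z ≤ ((a + q/4)^2 + z^2) ^ (1/2:ℝ) ∧
    Real.sqrt q ≤ 2 * ((a + q/4)^2 + z^2) ^ (1/4:ℝ) := by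
  have hu : 0 < a + q/4 := by linarith
  set u := a + q/4 with hu_def
  set b := u^2 + z^2 with hb_def
  have hb : 0 < b := by nlinarith [sq_nonneg z]
  have hsb : Real.sqrt b = b ^ (1/2:ℝ) := Real.sqrt_eq_rpow b
  have f1 : u ≤ b ^ (1/2:ℝ) := by
    rw [← hsb]
    calc u = Real.sqrt (u^2) := (Real.sqrt_sq hu.le).symm
    _ ≤ Real.sqrt b := Real.sqrt_le_sqrt (by nlinarith [sq_nonneg z])
  have f2 : z ≤ b ^ (1/2:ℝ) := by
    rw [← hsb]
    calc z = Real.sqrt (z^2) := (Real.sqrt_sq hz).symm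
    _ ≤ Real.sqrt b := Real.sqrt_le_sqrt (by nlinarith [sq_nonneg u])
  have f3 : Real.sqrt q ≤ 2 * b ^ (1/4:ℝ) := by
    have h4u : q ≤ 4 * u := by rw [hu_def]; linarith
    have s4 : Real.sqrt (4*u) = 2 * Real.sqrt u := by
      rw [Real.sqrt_mul (by norm_num : (0:ℝ) ≤ 4) u,
        show (4:ℝ) = 2^2 by norm_num, Real.sqrt_sq (by norm_num : (0:ℝ) ≤ 2)]
    have hsu : Real.sqrt u ≤ b ^ (1/4:ℝ) := by
      rw [Real.sqrt_eq_rpow]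
      calc u ^ (1/2:ℝ) ≤ (b ^ (1/2:ℝ)) ^ (1/2:ℝ) :=
        Real.rpow_le_rpow hu.le f1 (by norm_num)
      _ = b ^ (1/4:ℝ) := by rw [← Real.rpow_mul hb.le]; norm_num
    calc Real.sqrt q ≤ Real.sqrt (4*u) := Real.sqrt_le_sqrt h4u
    _ = 2 * Real.sqrt u := s4
    _ ≤ 2 * b ^ (1/4:ℝ) := by linarith
  exact ⟨hb, f1, f2, f3⟩

attribute [irreducible] qR qW qS

set_option maxHeartbeats 1000000 in
/-- for `j ∈ {1,2,3,4}` there is `C_j ≥ 0` with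
`|E_{V₁} ⋯ E_{V_j} B_t| ≤ C_j · B_t^{1-j/4}` for all `t ≥ 0`, all unit vectors
`V₁, …, V_j ∈ ℍ^m` and all `(X,Z) ∈ ℍ^m × Im(ℍ)`. -/
theorem stmt_10 (m : ℕ) (hm : 1 ≤ m) (j : ℕ) (hj : j ∈ ({1, 2, 3, 4} : Set ℕ)) :
    ∃ C : ℝ, 0 ≤ C ∧ ∀ t : ℝ, 0 ≤ t → ∀ V : Fin j → Fin m → Quaternion ℝ,
      (∀ i, ∑ k, Quaternion.normSq (V i k) = 1) →
      ∀ X : Fin m → Quaternion ℝ, ∀ Z : Quaternion ℝ, Z.re = 0 →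
        |EIter m (List.ofFn V) (BtF m t) (X, Z)|
          ≤ C * BtF m t (X, Z) ^ ((1 : ℝ) - (j : ℝ) / 4) := by
  simp only [Set.mem_insert_iff, Set.mem_singleton_iff] at hj
  rcases hj with rfl | rfl | rfl | rfl
  · -- j = 1
    refine ⟨4, by norm_num, fun t ht V hV X Z hZ => ?_⟩
    have ha : 0 < Real.exp (-2*t) := Real.exp_pos _
    set a := Real.exp (-2*t) with ha_def
    have hq := qR_self_nonneg (m := m) X
    obtain ⟨hb, f1, f2, f3⟩ := keyfacts a (qR m X X) ‖Z‖ ha hq (norm_nonneg Z)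
    have hbval : BtF m t (X, Z) = (a + qR m X X/4)^2 + ‖Z‖^2 := BtF_val t X Z
    have hofn : List.ofFn V = [V 0] := by simp [List.ofFn_succ]
    rw [hofn, show ((1:ℝ) - (1:ℕ)/4) = 1/4 + 1/2 by norm_num]
    show |EV m (V 0) (BtF m t) (X, Z)| ≤ _
    rw [level1, ← ha_def]
    have hV0 : Real.sqrt (qR m (V 0) (V 0)) = 1 := by
      rw [qR_self_eq]; rw [hV 0]; exact Real.sqrt_one
    have hr : |qR m X (V 0)| ≤ Real.sqrt (qR m X X) := by
      simpa [hV0] using qR_abs_le X (V 0)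
    have hw : ‖qW m X (V 0)‖ ≤ Real.sqrt (qR m X X) / 2 := by
      simpa [hV0] using qW_norm_le X (V 0)
    have hu : 0 < a + qR m X X / 4 := by linarith
    have hA : |g1 m a (V 0) (X, Z)|
        ≤ (a + qR m X X/4) * Real.sqrt (qR m X X) + ‖Z‖ * Real.sqrt (qR m X X) := by
      have h1 : |(a + qR m X X/4) * qR m X (V 0)|
          ≤ (a + qR m X X/4) * Real.sqrt (qR m X X) := by
        rw [abs_mul, abs_of_pos hu]; exact mul_le_mul_of_nonneg_left hr hu.le
      have h2 : |2 * ⟪Z, qW m X (V 0)⟫| ≤ ‖Z‖ * Real.sqrt (qR m X X) := by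
        rw [abs_mul, abs_two]
        have h3 := abs_real_inner_le_norm Z (qW m X (V 0))
        nlinarith [norm_nonneg Z, abs_nonneg (⟪Z, qW m X (V 0)⟫)]
      calc |g1 m a (V 0) (X, Z)| ≤ _ := abs_add_le _ _
      _ ≤ _ := add_le_add h1 h2
    rw [hbval]
    set b := (a + qR m X X/4)^2 + ‖Z‖^2
    have hm1 : (a + qR m X X/4) * Real.sqrt (qR m X X)
        ≤ b ^ (1/2:ℝ) * (2 * b ^ (1/4:ℝ)) :=
      mul_le_mul f1 f3 (Real.sqrt_nonneg _) (Real.rpow_nonneg hb.le _)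
    have hm2 : ‖Z‖ * Real.sqrt (qR m X X) ≤ b ^ (1/2:ℝ) * (2 * b ^ (1/4:ℝ)) :=
      mul_le_mul f2 f3 (Real.sqrt_nonneg _) (Real.rpow_nonneg hb.le _)
    have hmul : b ^ (1/4 + 1/2 : ℝ) = b ^ (1/4:ℝ) * b ^ (1/2:ℝ) := Real.rpow_add hb _ _
    rw [hmul]
    nlinarith [Real.rpow_nonneg hb.le (1/4:ℝ), Real.rpow_nonneg hb.le (1/2:ℝ)]
  · -- j = 2
    refine ⟨6, by norm_num, fun t ht V hV X Z hZ => ?_⟩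
    have ha : 0 < Real.exp (-2*t) := Real.exp_pos _
    set a := Real.exp (-2*t) with ha_def
    have hq := qR_self_nonneg (m := m) X
    obtain ⟨hb, f1, f2, f3⟩ := keyfacts a (qR m X X) ‖Z‖ ha hq (norm_nonneg Z)
    have hbval : BtF m t (X, Z) = (a + qR m X X/4)^2 + ‖Z‖^2 := BtF_val t X Z
    have hofn : List.ofFn V = [V 0, V 1] := by
      simp [List.ofFn_succ]
    rw [hofn, show ((1:ℝ) - (2:ℕ)/4) = 1/2 by norm_num]
    show |EV m (V 0) (EV m (V 1) (BtF m t)) (X, Z)| ≤ _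
    rw [level1, ← ha_def, level2]
    have hVs : ∀ i, Real.sqrt (qR m (V i) (V i)) = 1 := fun i => by
      rw [qR_self_eq, hV i]; exact Real.sqrt_one
    have hr : ∀ i, |qR m X (V i)| ≤ Real.sqrt (qR m X X) := fun i => by
      simpa [hVs i] using qR_abs_le X (V i)
    have hw : ∀ i, ‖qW m X (V i)‖ ≤ Real.sqrt (qR m X X) / 2 := fun i => by
      simpa [hVs i] using qW_norm_le X (V i)
    have hcr : ∀ i k, |qR m (V i) (V k)| ≤ 1 := fun i k => by
      simpa [hVs i, hVs k] using qR_abs_le (V i) (V k)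
    have hcw : ∀ i k, ‖qW m (V i) (V k)‖ ≤ 1/2 := fun i k => by
      simpa [hVs i, hVs k] using qW_norm_le (V i) (V k)
    have hu : 0 < a + qR m X X / 4 := by linarith
    have hsq := Real.sqrt_nonneg (qR m X X)
    have hss : Real.sqrt (qR m X X) * Real.sqrt (qR m X X) = qR m X X :=
      Real.mul_self_sqrt hq
    have hT1 : |qR m X (V 0) * qR m X (V 1) / 2| ≤ qR m X X / 2 := by
      rw [abs_div, abs_mul]
      have := mul_le_mul (hr 0) (hr 1) (abs_nonneg _) hsq
      rw [hss] at this
      simp only [abs_two]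
      linarith
    have hT2 : |(a + qR m X X/4) * qR m (V 0) (V 1)| ≤ a + qR m X X/4 := by
      rw [abs_mul, abs_of_pos hu]
      nlinarith [hcr 0 1, abs_nonneg (qR m (V 0) (V 1))]
    have hT3 : |2 * ⟪qW m X (V 0), qW m X (V 1)⟫| ≤ qR m X X / 2 := by
      rw [abs_mul, abs_two]
      have h3 := abs_real_inner_le_norm (qW m X (V 0)) (qW m X (V 1))
      have h4 := mul_le_mul (hw 0) (hw 1) (norm_nonneg _) (by linarith)
      nlinarith [norm_nonneg (qW m X (V 0)), norm_nonneg (qW m X (V 1))]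
    have hT4 : |2 * ⟪Z, qW m (V 0) (V 1)⟫| ≤ ‖Z‖ := by
      rw [abs_mul, abs_two]
      have h3 := abs_real_inner_le_norm Z (qW m (V 0) (V 1))
      nlinarith [norm_nonneg Z, hcw 0 1, norm_nonneg (qW m (V 0) (V 1))]
    have hG : g2 m a (V 0) (V 1) (X, Z) = qR m X (V 0) * qR m X (V 1) / 2
        + (a + qR m X X/4) * qR m (V 0) (V 1)
        + 2*⟪qW m X (V 0), qW m X (V 1)⟫ + 2*⟪Z, qW m (V 0) (V 1)⟫ := rfl
    have hA : |g2 m a (V 0) (V 1) (X, Z)| ≤ qR m X X + (a + qR m X X/4) + ‖Z‖ := by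
      rw [hG]
      have h5 := abs_add4 (qR m X (V 0) * qR m X (V 1) / 2)
        ((a + qR m X X/4) * qR m (V 0) (V 1))
        (2*⟪qW m X (V 0), qW m X (V 1)⟫) (2*⟪Z, qW m (V 0) (V 1)⟫)
      linarith [hT1, hT2, hT3, hT4]
    rw [hbval]
    set b := (a + qR m X X/4)^2 + ‖Z‖^2
    have h1412 : b ^ (1/4:ℝ) * b ^ (1/4:ℝ) = b ^ (1/2:ℝ) := by
      rw [← Real.rpow_add hb]; norm_num
    have hq4 : qR m X X ≤ 4 * b ^ (1/2:ℝ) := by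
      nlinarith [f3, Real.rpow_nonneg hb.le (1/4:ℝ)]
    linarith [f1, f2]
  · -- j = 3
    refine ⟨6, by norm_num, fun t ht V hV X Z hZ => ?_⟩
    have ha : 0 < Real.exp (-2*t) := Real.exp_pos _
    set a := Real.exp (-2*t) with ha_def
    have hq := qR_self_nonneg (m := m) X
    obtain ⟨hb, f1, f2, f3⟩ := keyfacts a (qR m X X) ‖Z‖ ha hq (norm_nonneg Z)
    have hbval : BtF m t (X, Z) = (a + qR m X X/4)^2 + ‖Z‖^2 := BtF_val t X Z
    have hofn : List.ofFn V = [V 0, V 1, V 2] := by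
      simp [List.ofFn_succ]
    rw [hofn, show ((1:ℝ) - (3:ℕ)/4) = 1/4 by norm_num]
    show |EV m (V 0) (EV m (V 1) (EV m (V 2) (BtF m t))) (X, Z)| ≤ _
    rw [level1, ← ha_def, level2, level3]
    have hVs : ∀ i, Real.sqrt (qR m (V i) (V i)) = 1 := fun i => by
      rw [qR_self_eq, hV i]; exact Real.sqrt_one
    have hr : ∀ i, |qR m X (V i)| ≤ Real.sqrt (qR m X X) := fun i => by
      simpa [hVs i] using qR_abs_le X (V i)
    have hw : ∀ i, ‖qW m X (V i)‖ ≤ Real.sqrt (qR m X X) / 2 := fun i => by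
      simpa [hVs i] using qW_norm_le X (V i)
    have hcr : ∀ i k, |qR m (V i) (V k)| ≤ 1 := fun i k => by
      simpa [hVs i, hVs k] using qR_abs_le (V i) (V k)
    have hcw : ∀ i k, ‖qW m (V i) (V k)‖ ≤ 1/2 := fun i k => by
      simpa [hVs i, hVs k] using qW_norm_le (V i) (V k)
    have hsq := Real.sqrt_nonneg (qR m X X)
    have habs : ∀ i k l, |qR m (V i) (V k) * qR m X (V l) / 2|
        ≤ Real.sqrt (qR m X X) / 2 := fun i k l => by
      rw [abs_div, abs_mul, abs_two]
      have := mul_le_mul (hcr i k) (hr l) (abs_nonneg _) (by norm_num)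
      have h0 := abs_nonneg (qR m X (V l))
      nlinarith
    have habs2 : ∀ i k l, |qR m X (V l) * qR m (V i) (V k) / 2|
        ≤ Real.sqrt (qR m X X) / 2 := fun i k l => by
      rw [mul_comm]; exact habs i k l
    have hinn1 : ∀ i k l, |2 * ⟪qW m (V i) (V k), qW m X (V l)⟫|
        ≤ Real.sqrt (qR m X X) / 2 := fun i k l => by
      rw [abs_mul, abs_two]
      have h3 := abs_real_inner_le_norm (qW m (V i) (V k)) (qW m X (V l))
      have h4 := mul_le_mul (hcw i k) (hw l) (norm_nonneg _) (by norm_num)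
      nlinarith [norm_nonneg (qW m (V i) (V k)), norm_nonneg (qW m X (V l))]
    have hinn2 : ∀ i k l, |2 * ⟪qW m X (V l), qW m (V i) (V k)⟫|
        ≤ Real.sqrt (qR m X X) / 2 := fun i k l => by
      rw [real_inner_comm]; exact hinn1 i k l
    have hG : g3 m (V 0) (V 1) (V 2) (X, Z)
        = qR m (V 0) (V 1) * qR m X (V 2) / 2 + qR m X (V 1) * qR m (V 0) (V 2) / 2
          + qR m X (V 0) * qR m (V 1) (V 2) / 2 + 2 * ⟪qW m (V 0) (V 1), qW m X (V 2)⟫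
          + 2 * ⟪qW m X (V 1), qW m (V 0) (V 2)⟫
          + 2 * ⟪qW m X (V 0), qW m (V 1) (V 2)⟫ := rfl
    have hA : |g3 m (V 0) (V 1) (V 2) (X, Z)| ≤ 3 * Real.sqrt (qR m X X) := by
      rw [hG]
      have h5 := abs_add6 (qR m (V 0) (V 1) * qR m X (V 2) / 2)
        (qR m X (V 1) * qR m (V 0) (V 2) / 2) (qR m X (V 0) * qR m (V 1) (V 2) / 2)
        (2 * ⟪qW m (V 0) (V 1), qW m X (V 2)⟫) (2 * ⟪qW m X (V 1), qW m (V 0) (V 2)⟫)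
        (2 * ⟪qW m X (V 0), qW m (V 1) (V 2)⟫)
      linarith [habs 0 1 2, habs2 0 2 1, habs2 1 2 0,
        hinn1 0 1 2, hinn2 0 2 1, hinn2 1 2 0]
    rw [hbval]
    linarith [f3]
  · -- j = 4
    refine ⟨3, by norm_num, fun t ht V hV X Z hZ => ?_⟩
    have ha : 0 < Real.exp (-2*t) := Real.exp_pos _
    set a := Real.exp (-2*t) with ha_def
    have hq := qR_self_nonneg (m := m) X
    obtain ⟨hb, f1, f2, f3⟩ := keyfacts a (qR m X X) ‖Z‖ ha hq (norm_nonneg Z)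
    have hbval : BtF m t (X, Z) = (a + qR m X X/4)^2 + ‖Z‖^2 := BtF_val t X Z
    have hofn : List.ofFn V = [V 0, V 1, V 2, V 3] := by
      simp [List.ofFn_succ, show (Fin.succ 2 : Fin 4) = 3 from rfl]
    rw [hofn, show ((1:ℝ) - (4:ℕ)/4) = 0 by norm_num]
    show |EV m (V 0) (EV m (V 1) (EV m (V 2) (EV m (V 3) (BtF m t)))) (X, Z)| ≤ _
    rw [level1, ← ha_def, level2, level3, level4]
    have hVs : ∀ i, Real.sqrt (qR m (V i) (V i)) = 1 := fun i => by
      rw [qR_self_eq, hV i]; exact Real.sqrt_one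
    have hcr : ∀ i k, |qR m (V i) (V k)| ≤ 1 := fun i k => by
      simpa [hVs i, hVs k] using qR_abs_le (V i) (V k)
    have hcw : ∀ i k, ‖qW m (V i) (V k)‖ ≤ 1/2 := fun i k => by
      simpa [hVs i, hVs k] using qW_norm_le (V i) (V k)
    have habs : ∀ i k i' k', |qR m (V i) (V k) * qR m (V i') (V k') / 2|
        ≤ 1/2 := fun i k i' k' => by
      rw [abs_div, abs_mul, abs_two]
      have := mul_le_mul (hcr i k) (hcr i' k') (abs_nonneg _) (by norm_num)
      have h0 := abs_nonneg (qR m (V i') (V k'))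
      nlinarith
    have hinn : ∀ i k i' k', |2 * ⟪qW m (V i) (V k), qW m (V i') (V k')⟫|
        ≤ 1/2 := fun i k i' k' => by
      rw [abs_mul, abs_two]
      have h3 := abs_real_inner_le_norm (qW m (V i) (V k)) (qW m (V i') (V k'))
      have h4 := mul_le_mul (hcw i k) (hcw i' k') (norm_nonneg _) (by norm_num)
      nlinarith [norm_nonneg (qW m (V i) (V k)), norm_nonneg (qW m (V i') (V k'))]
    have hG : g4 m (V 0) (V 1) (V 2) (V 3)
        = qR m (V 1) (V 2) * qR m (V 0) (V 3) / 2
          + qR m (V 0) (V 2) * qR m (V 1) (V 3) / 2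
          + qR m (V 0) (V 1) * qR m (V 2) (V 3) / 2
          + 2 * ⟪qW m (V 1) (V 2), qW m (V 0) (V 3)⟫
          + 2 * ⟪qW m (V 0) (V 2), qW m (V 1) (V 3)⟫
          + 2 * ⟪qW m (V 0) (V 1), qW m (V 2) (V 3)⟫ := rfl
    have hA : |g4 m (V 0) (V 1) (V 2) (V 3)| ≤ 3 := by
      rw [hG]
      have h5 := abs_add6 (qR m (V 1) (V 2) * qR m (V 0) (V 3) / 2)
        (qR m (V 0) (V 2) * qR m (V 1) (V 3) / 2)
        (qR m (V 0) (V 1) * qR m (V 2) (V 3) / 2)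
        (2 * ⟪qW m (V 1) (V 2), qW m (V 0) (V 3)⟫)
        (2 * ⟪qW m (V 0) (V 2), qW m (V 1) (V 3)⟫)
        (2 * ⟪qW m (V 0) (V 1), qW m (V 2) (V 3)⟫)
      linarith [habs 1 2 0 3, habs 0 2 1 3, habs 0 1 2 3,
        hinn 1 2 0 3, hinn 0 2 1 3, hinn 0 1 2 3]
    rw [Real.rpow_zero]
    linarith
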